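/- The closure of the reachable set from the north pole is axisymmetric: if γ > 0, then for every s ∈ ℝ, Rot_s(cl C₊((0,0,1))) = cl C₊((0,0,1)). -/

import Mathlib

open MeasureTheory Set

set_option maxHeartbeats 1000000
noncomputable section

/-- The state space: Bloch vectors in `ℝ³` with the Euclidean norm. -/
abbrev Pt := EuclideanSpace ℝ (Fin 3)

/-- The drift vector field `f₀`. -/
def f0 (ω γ : ℝ) (r : Pt) : Pt :=
  !₂[-r 1 - (γ / (2 * ω)) * r 0, r 0 - (γ / (2 * ω)) * r 1, (γ / ω) * (1 - r 2)]

/-- The coherent-control vector field `f₁` (infinitesimal rotation about the `r_x`-axis). -/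
def f1 (r : Pt) : Pt := !₂[0, -r 2, r 1]

/-- The incoherent-control vector field `f₂`. -/
def f2 (r : Pt) : Pt := !₂[-r 0 / 2, -r 1 / 2, -r 2]

/-- Velocity of the system with only coherent control `u`. -/
def velC (ω κ γ : ℝ) (u : ℝ → ℝ) (r : ℝ → Pt) (t : ℝ) : Pt :=
  ω • f0 ω γ (r t) + (2 * κ * u t) • f1 (r t)

/-- Forward reachable set `C₊(r⁰)` using only coherent control: endpoints of absolutely
continuous trajectories, encoded via the integral equation with integrable right-hand side. -/
def reachC (ω κ γ : ℝ) (r0 : Pt) : Set Pt :=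
  {r1 | ∃ (T : ℝ) (u : ℝ → ℝ) (r : ℝ → Pt), 0 ≤ T ∧
    IntegrableOn u (Icc 0 T) ∧
    IntervalIntegrable (velC ω κ γ u r) volume 0 T ∧
    (∀ t ∈ Icc 0 T, r t = r0 + ∫ s in (0:ℝ)..t, velC ω κ γ u r s) ∧
    r T = r1}

/-- Rotation by angle `s` about the `r_x`-axis. -/
def Rot (s : ℝ) (r : Pt) : Pt :=
  !₂[r 0, r 1 * Real.cos s - r 2 * Real.sin s, r 1 * Real.sin s + r 2 * Real.cos s]

/-! ### Auxiliary material -/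

open NormedSpace

abbrev Op := Pt →L[ℝ] Pt

set_option synthInstance.maxHeartbeats 1000000 in
instance iOp1 : SMulCommClass ℝ Op Op := ⟨fun r A B => by
  apply ContinuousLinearMap.ext; intro x
  simp⟩

instance iOpQ : NormedAlgebra ℚ Op := NormedAlgebra.restrictScalars ℚ ℝ Op

instance iOp2 : IsScalarTower ℝ Op Op := ⟨fun r A B => by
  apply ContinuousLinearMap.ext; intro x
  simp [smul_eq_mul, ContinuousLinearMap.mul_apply]⟩

/-- helper: build a CLM on Pt from a componentwise-linear formula -/
def mkOp (a b c d e f g h i : ℝ) : Op :=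
  LinearMap.toContinuousLinearMap
  { toFun := fun r => (!₂[a * r 0 + b * r 1 + c * r 2,
                        d * r 0 + e * r 1 + f * r 2,
                        g * r 0 + h * r 1 + i * r 2] : Pt)
    map_add' := by intro x y; ext j; fin_cases j <;>
      simp [PiLp.add_apply] <;> ring
    map_smul' := by intro t x; ext j; fin_cases j <;>
      simp [PiLp.smul_apply, smul_eq_mul] <;> ring }

@[simp] lemma mkOp_apply (a b c d e f g h i : ℝ) (r : Pt) :
    mkOp a b c d e f g h i r = (!₂[a * r 0 + b * r 1 + c * r 2,
      d * r 0 + e * r 1 + f * r 2, g * r 0 + h * r 1 + i * r 2] : Pt) := rfl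

def Bop : Op := mkOp 0 0 0 0 0 (-1) 0 1 0
def Pop : Op := mkOp 0 0 0 0 1 0 0 0 1
def Eop : Op := mkOp 1 0 0 0 0 0 0 0 0
def Lop (ω γ : ℝ) : Op := mkOp (-(γ/2)) (-ω) 0 ω (-(γ/2)) 0 0 0 (-γ)
def cvec (γ : ℝ) : Pt := !₂[0, 0, γ]

lemma vel_eq (ω γ : ℝ) (hω : ω ≠ 0) (a : ℝ) (r : Pt) :
    ω • f0 ω γ r + a • f1 r = (Lop ω γ + a • Bop) r + cvec γ := by
  ext j
  fin_cases j <;>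
    simp [f0, f1, Lop, Bop, cvec, PiLp.add_apply, PiLp.smul_apply, smul_eq_mul,
      ContinuousLinearMap.add_apply, ContinuousLinearMap.smul_apply] <;>
    field_simp <;> ring

def RotOp (s : ℝ) : Op := Eop + Real.cos s • Pop + Real.sin s • Bop

lemma rotOp_apply (s : ℝ) (r : Pt) : RotOp s r = Rot s r := by
  ext j
  fin_cases j <;>
    simp [RotOp, Rot, Eop, Pop, Bop, ContinuousLinearMap.add_apply,
      ContinuousLinearMap.smul_apply, PiLp.add_apply, PiLp.smul_apply, smul_eq_mul] <;> ring

lemma op_ext (A B : Op) (h : ∀ r, A r = B r) : A = B := ContinuousLinearMap.ext h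

lemma B_mul_E : Bop * Eop = 0 := by
  apply op_ext; intro r; ext j; fin_cases j <;>
    simp [Bop, Eop, ContinuousLinearMap.mul_apply]
lemma B_mul_P : Bop * Pop = Bop := by
  apply op_ext; intro r; ext j; fin_cases j <;>
    simp [Bop, Pop, ContinuousLinearMap.mul_apply]
lemma B_mul_B : Bop * Bop = -Pop := by
  apply op_ext; intro r; ext j; fin_cases j <;>
    simp [Bop, Pop, ContinuousLinearMap.mul_apply, ContinuousLinearMap.neg_apply,
      PiLp.neg_apply]

lemma RotOp_zero : RotOp 0 = 1 := by
  apply op_ext; intro r; ext j; fin_cases j <;>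
    simp [RotOp, Eop, Pop, Bop, ContinuousLinearMap.add_apply,
      ContinuousLinearMap.smul_apply, PiLp.add_apply, PiLp.smul_apply, smul_eq_mul,
      ContinuousLinearMap.one_apply]

lemma hasDerivAt_RotOp (s : ℝ) :
    HasDerivAt RotOp (Bop * RotOp s) s := by
  have h1 : HasDerivAt (fun s => Real.cos s • Pop) ((-Real.sin s) • Pop) s :=
    (Real.hasDerivAt_cos s).smul_const Pop
  have h2 : HasDerivAt (fun s => Real.sin s • Bop) (Real.cos s • Bop) s :=
    (Real.hasDerivAt_sin s).smul_const Bop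
  have h := ((hasDerivAt_const s Eop).add h1).add h2
  convert h using 1
  · rfl
  · rfl
  · rfl
  · rfl
  rw [RotOp, mul_add, mul_add, B_mul_E, mul_smul_comm, mul_smul_comm, B_mul_P, B_mul_B]
  module

lemma hasDerivAt_exp_neg (x : ℝ) :
    HasDerivAt (fun t : ℝ => exp ((-t) • Bop))
      (-(Bop * exp (-(x • Bop)))) x := by
  have h := (hasDerivAt_exp_smul_const' (𝕂 := ℝ) Bop (-x)).scomp x (hasDerivAt_neg x)
  have e1 : ((fun u : ℝ => exp (u • Bop)) ∘ fun t : ℝ => -t)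
      = fun t : ℝ => exp ((-t) • Bop) := rfl
  rw [e1] at h
  simpa [neg_one_smul] using h

lemma commBexp (x : ℝ) : Commute Bop (exp (-(x • Bop))) :=
  (((Commute.refl Bop).smul_right x).neg_right).exp_right

lemma exp_smul_Bop (s : ℝ) : exp (s • Bop) = RotOp s := by
  have key : ∀ t : ℝ, exp ((-t) • Bop) * RotOp t = 1 := by
    intro t
    have hderiv : ∀ x : ℝ, HasDerivAt (fun t : ℝ => exp ((-t) • Bop) * RotOp t) 0 x := by
      intro x
      have hprod := (hasDerivAt_exp_neg x).mul (hasDerivAt_RotOp x)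
      have e2 : exp (-(x • Bop)) * (Bop * RotOp x)
          = Bop * exp (-(x • Bop)) * RotOp x := by
        rw [← mul_assoc, ← (commBexp x).eq]
      have e5 : ((-x) • Bop) = -(x • Bop) := neg_smul x Bop
      rw [e5] at hprod
      rw [e2] at hprod
      convert hprod using 1
      · rfl
      · rfl
      · rfl
      · rfl
      exact (neg_add_cancel (Bop * exp (-(x • Bop)) * RotOp x)).symm
    have hconst := is_const_of_deriv_eq_zero
      (f := fun t : ℝ => exp ((-t) • Bop) * RotOp t)
      (fun x => (hderiv x).differentiableAt) (fun x => (hderiv x).deriv) t 0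
    have e3 : ((-0:ℝ)) • Bop = (0:Op) := by rw [neg_zero]; exact zero_smul ℝ Bop
    have e3' : (0:ℝ) • Bop = (0:Op) := zero_smul ℝ Bop
    simpa [RotOp_zero, e3, e3', exp_zero] using hconst
  have hc : Commute (s • Bop) ((-s) • Bop) :=
    ((Commute.refl Bop).smul_left s).smul_right (-s)
  calc exp (s • Bop) = exp (s • Bop) * (exp ((-s) • Bop) * RotOp s) := by
        rw [key s, mul_one]
    _ = (exp (s • Bop) * exp ((-s) • Bop)) * RotOp s := by rw [mul_assoc]
    _ = RotOp s := by
        have e4 : (-s) • Bop = -(s • Bop) := neg_smul s Bop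
        rw [← exp_add_of_commute hc, e4, add_neg_cancel, exp_zero, one_mul]

lemma norm_exp_le_exp_norm' (A : Op) : ‖exp A‖ ≤ Real.exp ‖A‖ := by
  rw [Real.exp_eq_exp_ℝ, exp_eq_tsum (𝕂 := ℝ), exp_eq_tsum (𝕂 := ℝ)]
  simp only
  refine (norm_tsum_le_tsum_norm (norm_expSeries_summable' (𝕂 := ℝ) A)).trans ?_
  have hs2 : Summable fun n : ℕ => ((n.factorial : ℝ))⁻¹ • ‖A‖ ^ n := by
    simpa [smul_eq_mul, div_eq_inv_mul] using Real.summable_pow_div_factorial ‖A‖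
  refine Summable.tsum_le_tsum (fun n => ?_) (norm_expSeries_summable' (𝕂 := ℝ) A) hs2
  rw [norm_smul, smul_eq_mul]
  gcongr
  · simp
  · exact norm_pow_le A n

section sol
variable (M : Op) (c r1 : Pt)

/-- integral term of the variation-of-constants formula -/
def gfun (t : ℝ) : Pt := ∫ σ in (0:ℝ)..t, exp (-(σ • M)) c

/-- explicit solution of `ρ' = M ρ + c`, `ρ 0 = r1` -/
def sol (t : ℝ) : Pt := exp (t • M) (r1 + gfun M c t)

lemma cont_integrand : Continuous fun σ : ℝ => exp (-(σ • M)) c := by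
  have h1 : Continuous fun σ : ℝ => -(σ • M) :=
    (continuous_id.smul continuous_const).neg
  exact (exp_continuous.comp h1).clm_apply continuous_const

lemma gfun_deriv (t : ℝ) : HasDerivAt (gfun M c) (exp (-(t • M)) c) t := by
  refine intervalIntegral.integral_hasDerivAt_right
    ((cont_integrand M c).intervalIntegrable _ _)
    ((cont_integrand M c).stronglyMeasurableAtFilter _ _)
    (cont_integrand M c).continuousAt

lemma exp_mul_exp_neg (A : Op) : exp A * exp (-A) = 1 := by
  rw [← exp_add_of_commute (Commute.refl A).neg_right, add_neg_cancel, exp_zero]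

lemma sol_deriv (t : ℝ) : HasDerivAt (sol M c r1) (M (sol M c r1 t) + c) t := by
  have hexp : HasDerivAt (fun t : ℝ => exp (t • M)) (exp (t • M) * M) t :=
    hasDerivAt_exp_smul_const (𝕂 := ℝ) M t
  have hf : HasDerivAt (fun t : ℝ => r1 + gfun M c t) (0 + exp (-(t • M)) c) t :=
    (hasDerivAt_const t r1).add (gfun_deriv M c t)
  have h := hexp.clm_apply hf
  have hcomm : Commute M (exp (t • M)) :=
    ((Commute.refl M).smul_right t).exp_right
  convert h using 1
  · rfl
  · rfl
  · rfl
  · rfl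
  rw [zero_add]
  have e1 : (exp (t • M) * M) (r1 + gfun M c t) = exp (t • M) (M (r1 + gfun M c t)) :=
    rfl
  have e2 : M (sol M c r1 t) = exp (t • M) (M (r1 + gfun M c t)) := by
    show M (exp (t • M) (r1 + gfun M c t)) = _
    calc M (exp (t • M) (r1 + gfun M c t)) = (M * exp (t • M)) (r1 + gfun M c t) := rfl
      _ = (exp (t • M) * M) (r1 + gfun M c t) := by rw [hcomm.eq]
      _ = exp (t • M) (M (r1 + gfun M c t)) := rfl
  have e3 : exp (t • M) (exp (-(t • M)) c) = c := by
    calc exp (t • M) (exp (-(t • M)) c) = (exp (t • M) * exp (-(t • M))) c := rfl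
      _ = (1 : Op) c := by rw [exp_mul_exp_neg]
      _ = c := rfl
  rw [e1, ← e2, e3]

lemma sol_zero : sol M c r1 0 = r1 := by
  have h0 : (0:ℝ) • M = 0 := zero_smul ℝ M
  simp [sol, gfun, h0, exp_zero]

lemma sol_cont : Continuous (sol M c r1) :=
  (continuous_iff_continuousAt.2 fun t => (sol_deriv M c r1 t).continuousAt)

lemma sol_vel_cont : Continuous fun t => M (sol M c r1 t) + c :=
  (M.continuous.comp (sol_cont M c r1)).add continuous_const

lemma sol_integral (t : ℝ) :
    sol M c r1 t = r1 + ∫ σ in (0:ℝ)..t, (M (sol M c r1 σ) + c) := by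
  have h := intervalIntegral.integral_eq_sub_of_hasDerivAt
    (f := sol M c r1) (f' := fun σ => M (sol M c r1 σ) + c)
    (fun σ _ => sol_deriv M c r1 σ)
    ((sol_vel_cont M c r1).intervalIntegrable 0 t)
  rw [h, sol_zero]
  abel
end sol

lemma extend_mem (ω κ γ : ℝ) (hω : 0 < ω) (hκ : 0 < κ) {r0 r1 : Pt}
    (h : r1 ∈ reachC ω κ γ r0) (a : ℝ) {ε : ℝ} (hε : 0 < ε) :
    sol (Lop ω γ + a • Bop) (cvec γ) r1 ε ∈ reachC ω κ γ r0 := by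
  obtain ⟨T, u, r, hT, hu, hvel, heq, hend⟩ := h
  set M : Op := Lop ω γ + a • Bop with hM
  set c : Pt := cvec γ with hc
  set ρ : ℝ → Pt := sol M c r1 with hρ
  set ub : ℝ := a / (2 * κ) with hub
  have h2κ : 2 * κ * ub = a := by rw [hub]; field_simp [hκ.ne']
  set u' : ℝ → ℝ := fun t => if t ≤ T then u t else ub with hu'def
  set r' : ℝ → Pt := fun t => if t ≤ T then r t else ρ (t - T) with hr'def
  have hTle : T ≤ T + ε := le_add_of_nonneg_right hε.le
  have hveleq : ∀ t, T < t → velC ω κ γ u' r' t = M (ρ (t - T)) + c := by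
    intro t ht
    have h1 : u' t = ub := by simp [hu'def, not_le.2 ht]
    have h2 : r' t = ρ (t - T) := by simp [hr'def, not_le.2 ht]
    rw [velC, h1, h2, h2κ]
    exact vel_eq ω γ (ne_of_gt hω) a (ρ (t - T))
  have hveleq0 : ∀ t, t ≤ T → velC ω κ γ u' r' t = velC ω κ γ u r t := by
    intro t ht; rw [velC, velC]; simp [hu'def, hr'def, ht]
  have hint1 : IntervalIntegrable (velC ω κ γ u' r') volume 0 T := by
    rw [intervalIntegrable_iff_integrableOn_Ioc_of_le hT]
    exact ((intervalIntegrable_iff_integrableOn_Ioc_of_le hT).1 hvel).congr_fun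
      (fun t ht => (hveleq0 t ht.2).symm) measurableSet_Ioc
  have hcontvel : Continuous fun t => M (ρ (t - T)) + c :=
    (M.continuous.comp ((sol_cont M c r1).comp (continuous_id.sub continuous_const))).add
      continuous_const
  have hint2 : IntervalIntegrable (velC ω κ γ u' r') volume T (T + ε) := by
    rw [intervalIntegrable_iff_integrableOn_Ioc_of_le hTle]
    exact ((intervalIntegrable_iff_integrableOn_Ioc_of_le hTle).1
        (hcontvel.intervalIntegrable T (T + ε))).congr_fun
      (fun t ht => (hveleq t ht.1).symm) measurableSet_Ioc
  have hIcongr0 : ∀ t, 0 ≤ t → t ≤ T →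
      (∫ σ in (0:ℝ)..t, velC ω κ γ u' r' σ) = ∫ σ in (0:ℝ)..t, velC ω κ γ u r σ := by
    intro t ht0 htT
    refine intervalIntegral.integral_congr fun σ hσ => ?_
    rw [uIcc_of_le ht0] at hσ
    exact hveleq0 σ (hσ.2.trans htT)
  refine ⟨T + ε, u', r', le_trans hT hTle, ?_, hint1.trans hint2, ?_, ?_⟩
  · have hA : IntegrableOn u' (Icc 0 T) := by
      refine hu.congr_fun (fun t ht => ?_) measurableSet_Icc
      simp [hu'def, ht.2]
    have hB : IntegrableOn u' (Ioc T (T + ε)) := by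
      have hconst : IntegrableOn (fun _ : ℝ => ub) (Ioc T (T + ε)) :=
        integrableOn_const measure_Ioc_lt_top.ne
      refine hconst.congr_fun (fun t ht => ?_) measurableSet_Ioc
      simp [hu'def, not_le.2 ht.1]
    refine (hA.union hB).mono_set fun x hx => ?_
    rcases le_or_gt x T with hle | hlt
    · exact Or.inl ⟨hx.1, hle⟩
    · exact Or.inr ⟨hlt, hx.2⟩
  · rintro t ⟨ht0, ht1⟩
    by_cases hcase : t ≤ T
    · have h1 : r' t = r t := by simp [hr'def, hcase]
      rw [h1, heq t ⟨ht0, hcase⟩, hIcongr0 t ht0 hcase]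
    · have htT : T < t := not_le.1 hcase
      have h1 : r' t = ρ (t - T) := by simp [hr'def, hcase]
      have hsplit : (∫ σ in (0:ℝ)..T, velC ω κ γ u' r' σ)
            + ∫ σ in T..t, velC ω κ γ u' r' σ
          = ∫ σ in (0:ℝ)..t, velC ω κ γ u' r' σ :=
        intervalIntegral.integral_add_adjacent_intervals hint1
          (hint2.mono_set (by rw [uIcc_of_le htT.le, uIcc_of_le hTle]
                              exact Icc_subset_Icc le_rfl ht1))
      have hI2 : (∫ σ in T..t, velC ω κ γ u' r' σ)
          = ∫ σ in T..t, (M (ρ (σ - T)) + c) := by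
        refine intervalIntegral.integral_congr_ae'
          (Filter.Eventually.of_forall fun σ hσ => hveleq σ hσ.1)
          (Filter.Eventually.of_forall fun σ hσ =>
            absurd (lt_of_lt_of_le hσ.1 hσ.2) (not_lt.2 htT.le))
      have hI3 : (∫ σ in T..t, (M (ρ (σ - T)) + c))
          = ∫ σ in (0:ℝ)..(t - T), (M (ρ σ) + c) := by
        have := intervalIntegral.integral_comp_sub_right
          (a := T) (b := t) (fun σ => M (ρ σ) + c) T
        simpa using this
      have hI4 : (∫ σ in (0:ℝ)..(t - T), (M (ρ σ) + c)) = ρ (t - T) - r1 := by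
        have h5 := sol_integral M c r1 (t - T)
        rw [← hρ] at h5
        rw [h5]; abel
      have hrT : (∫ σ in (0:ℝ)..T, velC ω κ γ u r σ) = r1 - r0 := by
        rw [← hend, heq T ⟨hT, le_rfl⟩]; abel
      rw [h1, ← hsplit, hIcongr0 T hT le_rfl, hrT, hI2, hI3, hI4]
      abel
  · have hnot : ¬ (T + ε ≤ T) := by linarith
    simp only [hr'def, if_neg hnot, add_sub_cancel_left]

lemma rot_mem_closure (ω κ γ : ℝ) (hω : 0 < ω) (hκ : 0 < κ) {r0 r1 : Pt}
    (h : r1 ∈ reachC ω κ γ r0) (s : ℝ) :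
    RotOp s r1 ∈ closure (reachC ω κ γ r0) := by
  set L : Op := Lop ω γ with hL
  set c : Pt := cvec γ with hc
  set ε : ℕ → ℝ := fun n => 1 / ((n : ℝ) + 1) with hεdef
  have hεpos : ∀ n, 0 < ε n := fun n => by positivity
  have hεle1 : ∀ n, ε n ≤ 1 := fun n => by
    rw [hεdef]; rw [div_le_one (by positivity)]; simp
  have hε0 : Filter.Tendsto ε Filter.atTop (nhds 0) :=
    tendsto_one_div_add_atTop_nhds_zero_nat
  set Mn : ℕ → Op := fun n => L + (s / ε n) • Bop with hMdef
  set p : ℕ → Pt := fun n => sol (Mn n) c r1 (ε n) with hpdef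
  have hmem : ∀ n, p n ∈ reachC ω κ γ r0 := fun n =>
    extend_mem ω κ γ hω hκ h (s / ε n) (hεpos n)
  have hsm : ∀ n, (ε n) • (Mn n) = ε n • L + s • Bop := by
    intro n
    rw [hMdef]
    rw [smul_add, smul_smul]
    congr 2
    field_simp
    exact mul_div_cancel_left₀ s (hεpos n).ne'
  -- limit is RotOp s r1
  have harg : Filter.Tendsto (fun n => ε n • L + s • Bop) Filter.atTop (nhds (s • Bop)) := by
    have h1 := (hε0.smul_const L).add_const (s • Bop)
    have e0 : (0:ℝ) • L = 0 := zero_smul ℝ L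
    rw [e0, zero_add] at h1
    exact h1
  have hA : Filter.Tendsto (fun n => exp (ε n • L + s • Bop)) Filter.atTop
      (nhds (exp (s • Bop))) :=
    ((exp_continuous (𝔸 := Op)).tendsto _).comp harg
  set K : ℝ := Real.exp (‖L‖ + |s| * ‖Bop‖) * ‖c‖ with hK
  have hgb : ∀ n, ‖gfun (Mn n) c (ε n)‖ ≤ ε n * K := by
    intro n
    have hnorm : ∀ σ ∈ Set.uIoc (0:ℝ) (ε n), ‖exp (-(σ • Mn n)) c‖ ≤ K := by
      intro σ hσ
      rw [uIoc_of_le (hεpos n).le] at hσ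
      have h1 : ‖exp (-(σ • Mn n)) c‖ ≤ ‖exp (-(σ • Mn n))‖ * ‖c‖ :=
        (exp (-(σ • Mn n))).le_opNorm c
      have h2 : ‖exp (-(σ • Mn n))‖ ≤ Real.exp ‖-(σ • Mn n)‖ :=
        norm_exp_le_exp_norm' _
      have h3 : ‖-(σ • Mn n)‖ = σ * ‖Mn n‖ := by
        have hn1 : ‖-(σ • Mn n)‖ = ‖σ • Mn n‖ := norm_neg _
        have hn2 : ‖σ • Mn n‖ = ‖σ‖ * ‖Mn n‖ := by exact norm_smul σ (Mn n)
        rw [hn1, hn2, Real.norm_eq_abs, abs_of_pos hσ.1]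
      have h4 : σ * ‖Mn n‖ ≤ ε n * ‖Mn n‖ := by
        apply mul_le_mul_of_nonneg_right hσ.2 (norm_nonneg _)
      have h5 : ε n * ‖Mn n‖ = ‖ε n • Mn n‖ := by
        have hn2 : ‖ε n • Mn n‖ = ‖ε n‖ * ‖Mn n‖ := by exact norm_smul (ε n) (Mn n)
        rw [hn2, Real.norm_eq_abs, abs_of_pos (hεpos n)]
      have h6 : ‖ε n • Mn n‖ ≤ ‖L‖ + |s| * ‖Bop‖ := by
        rw [hsm n]
        refine (norm_add_le _ _).trans ?_
        gcongr
        · have hn2 : ‖ε n • L‖ = ‖ε n‖ * ‖L‖ := by exact norm_smul (ε n) L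
          rw [hn2, Real.norm_eq_abs, abs_of_pos (hεpos n)]
          nlinarith [norm_nonneg L, hεle1 n, hεpos n]
        · have hn2 : ‖s • Bop‖ = ‖s‖ * ‖Bop‖ := by exact norm_smul s Bop
          rw [hn2, Real.norm_eq_abs]
      calc ‖exp (-(σ • Mn n)) c‖ ≤ ‖exp (-(σ • Mn n))‖ * ‖c‖ := h1
        _ ≤ Real.exp ‖-(σ • Mn n)‖ * ‖c‖ := by gcongr
        _ ≤ Real.exp (‖L‖ + |s| * ‖Bop‖) * ‖c‖ := by
            gcongr
            rw [h3]
            exact h4.trans (h5.le.trans_eq' rfl |>.trans h6)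
        _ = K := rfl
    have := intervalIntegral.norm_integral_le_of_norm_le_const (C := K)
      (f := fun σ => exp (-(σ • Mn n)) c) (a := 0) (b := ε n) hnorm
    rw [gfun]
    calc ‖∫ σ in (0:ℝ)..(ε n), exp (-(σ • Mn n)) c‖ ≤ K * |ε n - 0| := this
      _ = ε n * K := by rw [sub_zero, abs_of_pos (hεpos n)]; ring
  have hg0 : Filter.Tendsto (fun n => gfun (Mn n) c (ε n)) Filter.atTop (nhds 0) := by
    have h7 := hε0.mul_const K
    rw [zero_mul] at h7
    exact squeeze_zero_norm hgb h7
  have hx : Filter.Tendsto (fun n => r1 + gfun (Mn n) c (ε n)) Filter.atTop (nhds r1) := by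
    have h8 := (tendsto_const_nhds (x := r1) (f := Filter.atTop (α := ℕ))).add hg0
    rw [add_zero] at h8
    exact h8
  have hpair : Filter.Tendsto
      (fun n => ((exp (ε n • L + s • Bop) : Op), r1 + gfun (Mn n) c (ε n)))
      Filter.atTop (nhds (exp (s • Bop), r1)) := hA.prodMk_nhds hx
  have happ := ((isBoundedBilinearMap_apply (𝕜 := ℝ) (E := Pt) (F := Pt)
      ).continuous.tendsto (exp (s • Bop), r1)).comp hpair
  have hpeq : ∀ n, p n = exp (ε n • L + s • Bop) (r1 + gfun (Mn n) c (ε n)) := by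
    intro n
    rw [hpdef]
    show sol (Mn n) c r1 (ε n) = _
    rw [sol, hsm n]
  have hfinal : Filter.Tendsto p Filter.atTop (nhds (RotOp s r1)) := by
    have h10 : ((fun q : Op × Pt => q.1 q.2) ∘
        (fun n => ((exp (ε n • L + s • Bop) : Op), r1 + gfun (Mn n) c (ε n)))) = p :=
      funext fun n => (hpeq n).symm
    rw [h10] at happ
    convert happ using 2
    show RotOp s r1 = exp (s • Bop) r1
    rw [exp_smul_Bop]
    rfl
  exact mem_closure_of_tendsto hfinal (Filter.Eventually.of_forall hmem)

lemma rot_continuous (s : ℝ) : Continuous (Rot s) := by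
  have h : Rot s = fun r => RotOp s r := by
    funext r; exact (rotOp_apply s r).symm
  rw [h]; exact (RotOp s).continuous

lemma rot_rot (s : ℝ) (y : Pt) : Rot s (Rot (-s) y) = y := by
  ext j
  fin_cases j
  · simp [Rot]
  · simp [Rot, Real.cos_neg, Real.sin_neg]
    linear_combination (y 1) * Real.sin_sq_add_cos_sq s
  · simp [Rot, Real.cos_neg, Real.sin_neg]
    linear_combination (y 2) * Real.sin_sq_add_cos_sq s

lemma rot_image_closure_subset (ω κ γ : ℝ) (hω : 0 < ω) (hκ : 0 < κ) (r0 : Pt) (s : ℝ) :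
    Rot s '' closure (reachC ω κ γ r0) ⊆ closure (reachC ω κ γ r0) := by
  have h2 : Rot s '' reachC ω κ γ r0 ⊆ closure (reachC ω κ γ r0) := by
    rintro _ ⟨z, hz, rfl⟩
    rw [← rotOp_apply]
    exact rot_mem_closure ω κ γ hω hκ hz s
  intro y hy
  obtain ⟨x, hx, rfl⟩ := hy
  have h1 : Rot s x ∈ closure (Rot s '' reachC ω κ γ r0) :=
    image_closure_subset_closure_image (rot_continuous s) (mem_image_of_mem _ hx)
  have h3 : closure (Rot s '' reachC ω κ γ r0) ⊆ closure (reachC ω κ γ r0) := by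
    rw [← closure_closure (s := reachC ω κ γ r0)]
    exact closure_mono h2
  exact h3 h1

/-- The closure of the reachable set from the north pole `(0,0,1)` is axisymmetric with
respect to rotations about the `r_x`-axis. -/
theorem closure_reach_axisymmetric (ω κ γ : ℝ) (hω : 0 < ω) (hκ : 0 < κ) (hγ : 0 < γ)
    (s : ℝ) :
    Rot s '' closure (reachC ω κ γ !₂[0, 0, 1]) = closure (reachC ω κ γ !₂[0, 0, 1]) := by
  apply Subset.antisymm
  · exact rot_image_closure_subset ω κ γ hω hκ _ s
  · intro y hy
    refine ⟨Rot (-s) y, ?_, rot_rot s y⟩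
    exact rot_image_closure_subset ω κ γ hω hκ _ (-s) (mem_image_of_mem _ hy)
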